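/- The rule (SC_n) is GK(A_m)^r-admissible: for every n ≥ 2, if nΓ ⇒ nΔ is GK(A_m)^r-derivable, then Γ ⇒ Δ is GK(A_m)^r-derivable. -/

import Mathlib

/-- Formulas of the modal-multiplicative language ℒ_Am□ : variables, → (`imp`)
and □ (`box`). -/
inductive FormM : Type
  | var : ℕ → FormM
  | imp : FormM → FormM → FormM
  | box : FormM → FormM
  deriving DecidableEq

/-- The defined constant `0̄ := p₀ → p₀` (with `p₀` the variable of index 0). -/
def zeroM : FormM := .imp (.var 0) (.var 0)

/-- The defined negation `¬φ := φ → 0̄`. -/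
def negM (φ : FormM) : FormM := .imp φ zeroM

/-- The defined connective `φ & ψ := ¬φ → ψ`. -/
def conjM (φ ψ : FormM) : FormM := .imp (negM φ) ψ

/-- The iterated conjunctions: `0φ := 0̄` and `(n+1)φ := φ & (nφ)`. -/
def iterM : ℕ → FormM → FormM
  | 0, _ => zeroM
  | n + 1, φ => conjM φ (iterM n φ)

/-- A K(A)-model: a nonempty set of worlds, an accessibility relation, and a
valuation of the variables bounded by some `r ≥ 0`. -/
structure KAModel where
  World : Type
  ne : Nonempty World
  R : World → World → Prop
  V : ℕ → World → ℝ
  r : ℝ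
  hr : 0 ≤ r
  hV : ∀ p x, V p x ∈ Set.Icc (-r) r

/-- The valuation extended to all ℒ_Am□-formulas.  Note that `sInf ∅ = 0` in `ℝ`,
matching the convention that the infimum of the empty set is `0`. -/
noncomputable def KAModel.val (M : KAModel) : FormM → M.World → ℝ
  | .var p, x => M.V p x
  | .imp φ ψ, x => M.val ψ x - M.val φ x
  | .box φ, x => sInf {v : ℝ | ∃ y, M.R x y ∧ M.val φ y = v}

/-- K(A)-validity of an ℒ_Am□-formula. -/
def KAValid (φ : FormM) : Prop := ∀ (M : KAModel) (x : M.World), 0 ≤ M.val φ x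

/-- A sequent: an ordered pair of finite multisets of ℒ_Am□-formulas. -/
abbrev SeqM := Multiset FormM × Multiset FormM

/-- The restricted calculus GK(A_m)^r, with rules (ID), (→⇒), (⇒→) and
(□_{k,n}). -/
inductive GKAmR : SeqM → Prop
  | id (Δ : Multiset FormM) : GKAmR (Δ, Δ)
  | impL {Γ Δ : Multiset FormM} {φ ψ : FormM} :
      GKAmR (Γ + {ψ}, {φ} + Δ) → GKAmR (Γ + {FormM.imp φ ψ}, Δ)
  | impR {Γ Δ : Multiset FormM} {φ ψ : FormM} :
      GKAmR (Γ + {φ}, {ψ} + Δ) → GKAmR (Γ, {FormM.imp φ ψ} + Δ)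
  | boxkn {Γ Δ : Multiset FormM} {n : ℕ} (k : ℕ) (hk : 1 ≤ k)
      (Γ₀ : Multiset FormM) (Γs : Fin n → Multiset FormM) (φs : Fin n → FormM)
      (hsplit : k • Γ = Γ₀ + ∑ i, Γs i)
      (h0 : GKAmR (Γ₀, (0 : Multiset FormM)))
      (hi : ∀ i : Fin n, GKAmR (Γs i, k • ({φs i} : Multiset FormM))) :
      GKAmR (Δ + Γ.map FormM.box,
        (∑ i : Fin n, ({FormM.box (φs i)} : Multiset FormM)) + Δ)

open Multiset

/-- Depth-indexed version of the calculus. -/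
inductive GKD : ℕ → SeqM → Prop
  | id (Δ : Multiset FormM) (d : ℕ) : GKD (d+1) (Δ, Δ)
  | impL {Γ Δ : Multiset FormM} {φ ψ : FormM} {d : ℕ} :
      GKD d (Γ + {ψ}, {φ} + Δ) → GKD (d+1) (Γ + {FormM.imp φ ψ}, Δ)
  | impR {Γ Δ : Multiset FormM} {φ ψ : FormM} {d : ℕ} :
      GKD d (Γ + {φ}, {ψ} + Δ) → GKD (d+1) (Γ, {FormM.imp φ ψ} + Δ)
  | boxkn {Γ Δ : Multiset FormM} {n : ℕ} {d : ℕ} (k : ℕ) (hk : 1 ≤ k)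
      (Γ₀ : Multiset FormM) (Γs : Fin n → Multiset FormM) (φs : Fin n → FormM)
      (hsplit : k • Γ = Γ₀ + ∑ i, Γs i)
      (h0 : GKD d (Γ₀, (0 : Multiset FormM)))
      (hi : ∀ i : Fin n, GKD d (Γs i, k • ({φs i} : Multiset FormM))) :
      GKD (d+1) (Δ + Γ.map FormM.box,
        (∑ i : Fin n, ({FormM.box (φs i)} : Multiset FormM)) + Δ)

lemma GKD.mono {d e : ℕ} {S : SeqM} (h : GKD d S) (hde : d ≤ e) : GKD e S := by
  induction h generalizing e with
  | id Δ d =>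
    obtain ⟨e', rfl⟩ := Nat.exists_eq_succ_of_ne_zero (show e ≠ 0 by omega)
    exact GKD.id Δ e'
  | impL h ih =>
    obtain ⟨e, rfl⟩ := Nat.exists_eq_succ_of_ne_zero (show e ≠ 0 by omega)
    exact GKD.impL (ih (by omega))
  | impR h ih =>
    obtain ⟨e, rfl⟩ := Nat.exists_eq_succ_of_ne_zero (show e ≠ 0 by omega)
    exact GKD.impR (ih (by omega))
  | boxkn k hk Γ₀ Γs φs hsplit h0 hi ih0 ihi =>
    obtain ⟨e, rfl⟩ := Nat.exists_eq_succ_of_ne_zero (show e ≠ 0 by omega)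
    exact GKD.boxkn k hk Γ₀ Γs φs hsplit (ih0 (by omega)) (fun i => ihi i (by omega))

lemma GKD.toGKAmR {d : ℕ} {S : SeqM} (h : GKD d S) : GKAmR S := by
  induction h with
  | id Δ d => exact GKAmR.id Δ
  | impL h ih => exact GKAmR.impL ih
  | impR h ih => exact GKAmR.impR ih
  | boxkn k hk Γ₀ Γs φs hsplit h0 hi ih0 ihi =>
    exact GKAmR.boxkn k hk Γ₀ Γs φs hsplit ih0 ihi

lemma GKAmR.toGKD {S : SeqM} (h : GKAmR S) : ∃ d, GKD d S := by
  induction h with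
  | id Δ => exact ⟨1, GKD.id Δ 0⟩
  | impL h ih => obtain ⟨d, hd⟩ := ih; exact ⟨d+1, GKD.impL hd⟩
  | impR h ih => obtain ⟨d, hd⟩ := ih; exact ⟨d+1, GKD.impR hd⟩
  | boxkn k hk Γ₀ Γs φs hsplit h0 hi ih0 ihi =>
    obtain ⟨d0, hd0⟩ := ih0
    choose ds hds using ihi
    refine ⟨(max d0 (Finset.univ.sup ds)) + 1,
      GKD.boxkn k hk Γ₀ Γs φs hsplit (hd0.mono (le_max_left _ _)) (fun i => (hds i).mono ?_)⟩
    exact le_trans (Finset.le_sup (Finset.mem_univ i)) (le_max_right _ _)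

/-- transport along multiset equalities -/
lemma rearr {Γ Δ Γ' Δ' : Multiset FormM} (h : GKAmR (Γ, Δ)) (h1 : Γ = Γ') (h2 : Δ = Δ') :
    GKAmR (Γ', Δ') := h1 ▸ h2 ▸ h

/-- Adding a single formula to both sides preserves derivability. -/
lemma Wone' {S : SeqM} (χ : FormM) (h : GKAmR S) :
    GKAmR (S.1 + {χ}, {χ} + S.2) := by
  induction h with
  | id Δ => exact rearr (GKAmR.id (Δ + {χ})) rfl (by abel)
  | impL h ih =>
    rename_i Γ Δ φ ψ
    have ih' : GKAmR ((Γ + {χ}) + {ψ}, {φ} + ({χ} + Δ)) :=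
      rearr ih (by dsimp only; abel) (by dsimp only; abel)
    exact rearr (GKAmR.impL ih') (by dsimp only; abel) rfl
  | impR h ih =>
    rename_i Γ Δ φ ψ
    have ih' : GKAmR ((Γ + {χ}) + {φ}, {ψ} + ({χ} + Δ)) :=
      rearr ih (by dsimp only; abel) (by dsimp only; abel)
    exact rearr (GKAmR.impR ih') rfl (by dsimp only; abel)
  | boxkn k hk Γ₀ Γs φs hsplit h0 hi ih0 ihi =>
    rename_i Γ Δ n
    exact rearr (GKAmR.boxkn (Δ := Δ + {χ}) k hk Γ₀ Γs φs hsplit h0 hi) (by dsimp only; abel) (by dsimp only; abel)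

lemma Wone {Γ Δ : Multiset FormM} (χ : FormM) (h : GKAmR (Γ, Δ)) :
    GKAmR (Γ + {χ}, {χ} + Δ) := Wone' χ h

/-- Adding a multiset to both sides preserves derivability. -/
lemma Wmul {Γ Δ : Multiset FormM} (Θ : Multiset FormM) (h : GKAmR (Γ, Δ)) :
    GKAmR (Γ + Θ, Θ + Δ) := by
  induction Θ using Multiset.induction_on with
  | empty => simpa using h
  | cons χ Θ ih =>
    have := Wone χ ih
    exact rearr this (by rw [← Multiset.singleton_add]; abel) (by rw [← Multiset.singleton_add]; abel)

lemma impLiter (c : ℕ) {X Y : Multiset FormM} {φ ψ : FormM}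
    (h : GKAmR (X + c • ({ψ} : Multiset FormM), c • ({φ} : Multiset FormM) + Y)) :
    GKAmR (X + c • ({FormM.imp φ ψ} : Multiset FormM), Y) := by
  induction c generalizing X Y with
  | zero => simpa using h
  | succ c ih =>
    have step : GKAmR ((X + c • ({ψ} : Multiset FormM)) + {FormM.imp φ ψ},
        c • ({φ} : Multiset FormM) + Y) :=
      GKAmR.impL (rearr h (by rw [succ_nsmul]; abel) (by rw [succ_nsmul]; abel))
    have := ih (X := X + {FormM.imp φ ψ}) (Y := Y) (rearr step (by abel) rfl)
    exact rearr this (by rw [succ_nsmul]; abel) rfl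

lemma impRiter (c : ℕ) {X Y : Multiset FormM} {φ ψ : FormM}
    (h : GKAmR (X + c • ({φ} : Multiset FormM), c • ({ψ} : Multiset FormM) + Y)) :
    GKAmR (X, c • ({FormM.imp φ ψ} : Multiset FormM) + Y) := by
  induction c generalizing X Y with
  | zero => simpa using h
  | succ c ih =>
    have step : GKAmR (X + c • ({φ} : Multiset FormM),
        {FormM.imp φ ψ} + (c • ({ψ} : Multiset FormM) + Y)) :=
      GKAmR.impR (rearr h (by rw [succ_nsmul]; abel) (by rw [succ_nsmul]; abel))
    have := ih (X := X) (Y := {FormM.imp φ ψ} + Y) (rearr step rfl (by abel))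
    exact rearr this rfl (by rw [succ_nsmul]; abel)

lemma sumFinList {α β : Type*} [AddCommMonoid β] (l : List α) (g : α → β) :
    ∑ i : Fin l.length, g (l.get i) = (l.map g).sum := by
  induction l with
  | nil => simp
  | cons a l ih =>
    rw [List.map_cons, List.sum_cons, ← ih]
    simp [List.length_cons, Fin.sum_univ_succ]

lemma listSingletonSum {α β : Type*} (l : List α) (f : α → β) :
    (l.map (fun a => ({f a} : Multiset β))).sum = ((l.map f : List β) : Multiset β) := by
  induction l with
  | nil => simp
  | cons a l ih => simp [ih, Multiset.singleton_add, Multiset.cons_coe]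

/-- Derived rule: box rule with a multiset of premise blocks. -/
lemma boxList (k : ℕ) (hk : 1 ≤ k) (Γ Θ Γ₀ : Multiset FormM)
    (B : Multiset (Multiset FormM × FormM))
    (hsplit : k • Γ = Γ₀ + (B.map Prod.fst).sum)
    (h0 : GKAmR (Γ₀, 0))
    (hB : ∀ p ∈ B, GKAmR (p.1, k • ({p.2} : Multiset FormM))) :
    GKAmR (Θ + Γ.map FormM.box, ((B.map Prod.snd).map FormM.box) + Θ) := by
  obtain ⟨l, rfl⟩ : ∃ l : List (Multiset FormM × FormM), (l : Multiset _) = B :=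
    ⟨B.toList, Multiset.coe_toList B⟩
  have h1 : ∑ i : Fin l.length, (l.get i).1 = ((l : Multiset (Multiset FormM × FormM)).map Prod.fst).sum := by
    rw [Multiset.map_coe, Multiset.sum_coe, ← sumFinList]
  have h2 : (∑ i : Fin l.length, ({FormM.box ((l.get i).2)} : Multiset FormM)) =
      (((l : Multiset (Multiset FormM × FormM)).map Prod.snd).map FormM.box) := by
    rw [Multiset.map_coe, Multiset.map_coe,
      sumFinList l (fun p => ({FormM.box p.2} : Multiset FormM)), listSingletonSum]
    simp only [Multiset.coe_eq_coe, List.map_map]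
    exact List.Perm.refl _
  have := GKAmR.boxkn (Γ := Γ) (Δ := Θ) k hk Γ₀ (fun i => (l.get i).1)
    (fun i => (l.get i).2) (by rw [hsplit, h1])
    h0 (fun i => hB _ (Multiset.mem_coe.mpr (l.get_mem i)))
  exact rearr this rfl (by rw [h2])

lemma finsum_singleton {ι β : Type*} (s : Finset ι) (g : ι → β) :
    (∑ i ∈ s, ({g i} : Multiset β)) = s.val.map g := by
  rw [Finset.sum_eq_multiset_sum,
    show Multiset.map (fun i => ({g i} : Multiset β)) s.val
      = (s.val.map g).map (fun a => ({a} : Multiset β)) by rw [Multiset.map_map]; rfl,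
    Multiset.sum_map_singleton]

lemma msum_nsmul {α : Type*} [AddCommMonoid α] (c : ℕ) (X : Multiset α) :
    (c • X).sum = c • X.sum := by
  induction c with
  | zero => simp
  | succ c ih => rw [succ_nsmul, succ_nsmul, Multiset.sum_add, ih]

lemma memsmul {α : Type*} {p : α} {c : ℕ} {X : Multiset α} (h : p ∈ c • X) : p ∈ X :=
  Multiset.mem_of_mem_nsmul h

/-- Scaling a derivable sequent by any natural number. -/
lemma Scale : ∀ (N : ℕ) {d : ℕ} {S : SeqM}, d ≤ N → GKD d S → ∀ c : ℕ,
    GKAmR (c • S.1, c • S.2) := by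
  intro N
  induction N with
  | zero => intro d S hd h c; cases h <;> omega
  | succ N ih =>
    intro d S hd h c
    cases h with
    | id Δ d' => exact GKAmR.id (c • Δ)
    | impL h =>
      rename_i Γ Δ φ ψ d'
      have H' : GKAmR (c • Γ + c • ({ψ} : Multiset FormM),
          c • ({φ} : Multiset FormM) + c • Δ) :=
        rearr (ih (show d' ≤ N by omega) h c) (by rw [smul_add]) (by rw [smul_add])
      exact rearr (impLiter c H') (by rw [smul_add]) rfl
    | impR h =>
      rename_i Γ Δ φ ψ d'
      have H' : GKAmR (c • Γ + c • ({φ} : Multiset FormM),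
          c • ({ψ} : Multiset FormM) + c • Δ) :=
        rearr (ih (show d' ≤ N by omega) h c) (by rw [smul_add]) (by rw [smul_add])
      exact rearr (impRiter c H') rfl (by rw [smul_add])
    | boxkn k hk Γ₀ Γs φs hsplit h0 hi =>
      rename_i Γ Δ n d'
      have hz : GKAmR (c • Γ₀, 0) := by
        have := ih (show d' ≤ N by omega) h0 c
        simpa using this
      have hbl : ∀ p ∈ (c • (Finset.univ.val.map (fun i => (Γs i, φs i)) :
          Multiset (Multiset FormM × FormM))), GKAmR (p.1, k • ({p.2} : Multiset FormM)) := by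
        intro p hp
        obtain ⟨i, _, rfl⟩ := Multiset.mem_map.mp (memsmul hp)
        exact (hi i).toGKAmR
      have hsp : k • (c • Γ) = c • Γ₀ +
          (((c • (Finset.univ.val.map (fun i => (Γs i, φs i)) :
            Multiset (Multiset FormM × FormM)))).map Prod.fst).sum := by
        rw [Multiset.map_nsmul, Multiset.map_map, msum_nsmul]
        rw [smul_comm k c, hsplit, smul_add, Finset.sum_eq_multiset_sum]
        rfl
      have := boxList k hk (c • Γ) (c • Δ) (c • Γ₀) _ hsp hz hbl
      refine rearr this ?_ ?_
      · rw [smul_add, Multiset.map_nsmul]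
      · rw [smul_add, Multiset.map_nsmul, Multiset.map_nsmul, Multiset.map_map,
          finsum_singleton]
        congr 2
        rw [Multiset.map_map]
        rfl

lemma SMid {d : ℕ} {S : SeqM} (h : GKD d S) (Θ : Multiset FormM) (c₁ c₂ : ℕ) :
    GKAmR (c₁ • Θ + c₂ • S.1, c₁ • Θ + c₂ • S.2) :=
  rearr (Wmul (c₁ • Θ) (Scale d le_rfl h c₂)) (by abel) rfl

/-- Scaled mix of two derivable sequents. -/
lemma SM : ∀ (N : ℕ) {d₁ d₂ : ℕ} {S₁ S₂ : SeqM}, d₁ + d₂ ≤ N → GKD d₁ S₁ → GKD d₂ S₂ →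
    ∀ c₁ c₂ : ℕ, GKAmR (c₁ • S₁.1 + c₂ • S₂.1, c₁ • S₁.2 + c₂ • S₂.2) := by
  intro N
  induction N with
  | zero => intro d₁ d₂ S₁ S₂ hN h₁ h₂ c₁ c₂; cases h₁ <;> omega
  | succ N ih =>
    intro d₁ d₂ S₁ S₂ hN h₁ h₂ c₁ c₂
    have h₁' := h₁
    have h₂' := h₂
    cases h₁ with
    | id Δ d' => exact SMid h₂ Δ c₁ c₂
    | impL h =>
      rename_i Γ Δ φ ψ d'
      have H := ih (show d' + d₂ ≤ N by omega) h h₂ c₁ c₂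
      have H' : GKAmR ((c₁ • Γ + c₂ • S₂.1) + c₁ • ({ψ} : Multiset FormM),
          c₁ • ({φ} : Multiset FormM) + (c₁ • Δ + c₂ • S₂.2)) :=
        rearr H (by simp only [smul_add]; abel) (by simp only [smul_add]; abel)
      exact rearr (impLiter c₁ H') (by simp only [smul_add]; abel) rfl
    | impR h =>
      rename_i Γ Δ φ ψ d'
      have H := ih (show d' + d₂ ≤ N by omega) h h₂ c₁ c₂
      have H' : GKAmR ((c₁ • Γ + c₂ • S₂.1) + c₁ • ({φ} : Multiset FormM),
          c₁ • ({ψ} : Multiset FormM) + (c₁ • Δ + c₂ • S₂.2)) :=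
        rearr H (by simp only [smul_add]; abel) (by simp only [smul_add]; abel)
      exact rearr (impRiter c₁ H') rfl (by simp only [smul_add]; abel)
    | boxkn k hk Γ₀ Γs φs hsplit h0 hi =>
      rename_i Γ Δ n d'
      cases h₂ with
      | id Δ₂ e' =>
        exact rearr (SMid h₁' Δ₂ c₂ c₁) (by abel) (by abel)
      | impL h =>
        rename_i Γ' Δ' φ ψ e'
        have H := ih (show d' + 1 + e' ≤ N by omega) h₁' h c₁ c₂
        have H' : GKAmR ((c₁ • (Δ + Multiset.map FormM.box Γ) + c₂ • Γ') + c₂ • ({ψ} : Multiset FormM),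
            c₂ • ({φ} : Multiset FormM) + (c₁ • ((∑ i : Fin n, ({FormM.box (φs i)} : Multiset FormM)) + Δ) + c₂ • Δ')) :=
          rearr H (by simp only [smul_add]; abel) (by simp only [smul_add]; abel)
        exact rearr (impLiter c₂ H') (by simp only [smul_add]; abel) rfl
      | impR h =>
        rename_i Γ' Δ' φ ψ e'
        have H := ih (show d' + 1 + e' ≤ N by omega) h₁' h c₁ c₂
        have H' : GKAmR ((c₁ • (Δ + Multiset.map FormM.box Γ) + c₂ • Γ') + c₂ • ({φ} : Multiset FormM),
            c₂ • ({ψ} : Multiset FormM) + (c₁ • ((∑ i : Fin n, ({FormM.box (φs i)} : Multiset FormM)) + Δ) + c₂ • Δ')) :=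
          rearr H (by simp only [smul_add]; abel) (by simp only [smul_add]; abel)
        exact rearr (impRiter c₂ H') rfl (by simp only [smul_add]; abel)
      | boxkn k' hk' Γ₀' Γs' φs' hsplit' h0' hi' =>
        rename_i Γ' Δ' n' e'
        set B : Multiset (Multiset FormM × FormM) :=
          (c₁ • (Finset.univ.val.map (fun i => (k' • Γs i, φs i)))) +
          (c₂ • (Finset.univ.val.map (fun j => (k • Γs' j, φs' j)))) with hBdef
        have hk'' : 1 ≤ k * k' := by
          calc 1 = 1 * 1 := by ring
          _ ≤ k * k' := Nat.mul_le_mul hk hk'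
        have hz : GKAmR ((c₁ * k') • Γ₀ + (c₂ * k) • Γ₀', 0) := by
          have := ih (show d' + e' ≤ N by omega) h0 h0' (c₁ * k') (c₂ * k)
          simpa using this
        have hbl : ∀ p ∈ B, GKAmR (p.1, (k * k') • ({p.2} : Multiset FormM)) := by
          intro p hp
          rcases Multiset.mem_add.mp hp with hp | hp
          · obtain ⟨i, _, rfl⟩ := Multiset.mem_map.mp (memsmul hp)
            have := Scale d' le_rfl (hi i) k'
            exact rearr this rfl (by rw [smul_smul, mul_comm k' k])
          · obtain ⟨j, _, rfl⟩ := Multiset.mem_map.mp (memsmul hp)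
            have := Scale e' le_rfl (hi' j) k
            exact rearr this rfl (by rw [smul_smul])
        have BF : (B.map Prod.fst).sum =
            c₁ • (∑ i, k' • Γs i) + c₂ • (∑ j, k • Γs' j) := by
          rw [hBdef, Multiset.map_add, Multiset.map_nsmul, Multiset.map_nsmul,
            Multiset.map_map, Multiset.map_map, Multiset.sum_add, msum_nsmul, msum_nsmul,
            Finset.sum_eq_multiset_sum, Finset.sum_eq_multiset_sum]
          rfl
        have BS : (B.map Prod.snd) =
            c₁ • (Finset.univ.val.map φs) + c₂ • (Finset.univ.val.map φs') := by
          rw [hBdef, Multiset.map_add, Multiset.map_nsmul, Multiset.map_nsmul,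
            Multiset.map_map, Multiset.map_map]
          rfl
        have hsp : (k * k') • (c₁ • Γ + c₂ • Γ') =
            ((c₁ * k') • Γ₀ + (c₂ * k) • Γ₀') + (B.map Prod.fst).sum := by
          have A1 : (k * k') • Γ = k' • Γ₀ + ∑ i, k' • Γs i := by
            rw [mul_comm, mul_smul, hsplit, smul_add, Finset.smul_sum]
          have A2 : (k * k') • Γ' = k • Γ₀' + ∑ j, k • Γs' j := by
            rw [mul_smul, hsplit', smul_add, Finset.smul_sum]
          rw [BF, smul_add, smul_comm (k * k') c₁, smul_comm (k * k') c₂, A1, A2,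
            smul_add, smul_add, smul_smul, smul_smul]
          abel
        have key := boxList (k * k') hk'' (c₁ • Γ + c₂ • Γ') (c₁ • Δ + c₂ • Δ')
          ((c₁ * k') • Γ₀ + (c₂ * k) • Γ₀') B hsp hz hbl
        refine rearr key ?_ ?_
        · rw [Multiset.map_add, Multiset.map_nsmul, Multiset.map_nsmul,
            smul_add, smul_add]
          abel
        · rw [BS, Multiset.map_add, Multiset.map_nsmul, Multiset.map_nsmul,
            Multiset.map_map, Multiset.map_map, smul_add, smul_add,
            finsum_singleton Finset.univ (fun i => FormM.box (φs i)),
            finsum_singleton Finset.univ (fun j => FormM.box (φs' j))]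
          simp only [Function.comp_def]
          abel

/-- Binary mix. -/
lemma mixA {S T : SeqM} (hS : GKAmR S) (hT : GKAmR T) : GKAmR (S.1 + T.1, S.2 + T.2) := by
  obtain ⟨d₁, h₁⟩ := hS.toGKD
  obtain ⟨d₂, h₂⟩ := hT.toGKD
  simpa using SM (d₁ + d₂) le_rfl h₁ h₂ 1 1

/-- Multiset mix. -/
lemma mixM (B : Multiset SeqM) (h : ∀ s ∈ B, GKAmR s) :
    GKAmR ((B.map Prod.fst).sum, (B.map Prod.snd).sum) := by
  induction B using Multiset.induction_on with
  | empty => simpa using GKAmR.id 0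
  | cons s B ih =>
    have H := mixA (h s (Multiset.mem_cons_self s B))
      (ih (fun t ht => h t (Multiset.mem_cons_of_mem ht)))
    exact rearr H (by simp) (by simp)

lemma aux1 {φ ψ : FormM} : GKAmR ({ψ}, {FormM.imp φ ψ} + {φ}) :=
  GKAmR.impR (Γ := {ψ}) (Δ := {φ}) (rearr (GKAmR.id ({ψ} + {φ})) rfl (by abel))

lemma aux2 {φ ψ : FormM} : GKAmR ({φ} + {FormM.imp φ ψ}, {ψ}) :=
  GKAmR.impL (Γ := {φ}) (Δ := {ψ}) (GKAmR.id ({φ} + {ψ}))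

/-- Invertibility of the left implication rule. -/
lemma invL' {S : SeqM} (h : GKAmR S) : ∀ {Γ Δ : Multiset FormM} {φ ψ : FormM},
    S = (Γ + {FormM.imp φ ψ}, Δ) → GKAmR (Γ + {ψ}, {φ} + Δ) := by
  induction h with
  | id Θ =>
    intro Γ Δ φ ψ hS
    injection hS with h1 h2
    subst h2
    rw [h1]
    exact rearr (GKAmR.impR (Γ := Γ + {ψ}) (Δ := {φ} + Γ)
      (rearr (GKAmR.id (Γ + {ψ} + {φ})) rfl (by abel))) rfl (by abel)
  | impL hprem ih =>
    rename_i Γ' Δ' φ' ψ'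
    intro Γ Δ φ ψ hS
    injection hS with h1 h2
    subst h2
    have h1' : FormM.imp φ' ψ' ::ₘ Γ' = FormM.imp φ ψ ::ₘ Γ := by
      rwa [add_comm Γ' _, Multiset.singleton_add, add_comm Γ _, Multiset.singleton_add] at h1
    rcases Multiset.cons_eq_cons.mp h1' with ⟨hf, hΓ⟩ | ⟨_, cs, hcs1, hcs2⟩
    · injection hf with e1 e2
      subst e1; subst e2; subst hΓ
      exact hprem
    · have H := ih (Γ := cs + {ψ'}) (Δ := {φ'} + Δ')
        (by rw [hcs1]; refine Prod.ext ?_ rfl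
            simp only [← Multiset.singleton_add]; abel)
      have H' : GKAmR ((cs + {ψ}) + {ψ'}, {φ'} + ({φ} + Δ')) :=
        rearr H (by abel) (by abel)
      exact rearr (GKAmR.impL H') (by rw [hcs2]; simp only [← Multiset.singleton_add]; abel) rfl
  | impR hprem ih =>
    rename_i Γ' Δ' φ' ψ'
    intro Γ Δ φ ψ hS
    injection hS with h1 h2
    have H := ih (Γ := Γ + {φ'}) (Δ := {ψ'} + Δ')
      (by rw [h1]; exact Prod.ext (by abel) rfl)
    have H' : GKAmR ((Γ + {ψ}) + {φ'}, {ψ'} + ({φ} + Δ')) :=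
      rearr H (by abel) (by abel)
    exact rearr (GKAmR.impR H') rfl (by rw [← h2]; abel)
  | boxkn k hk Γ₀ Γs φs hsplit h0 hi ih0 ihi =>
    rename_i Γb Δc nn
    intro Γ Δ φ ψ hS
    injection hS with h1 h2
    have hmem : FormM.imp φ ψ ∈ Δc := by
      have hm : FormM.imp φ ψ ∈ Δc + Γb.map FormM.box := by rw [h1]; simp
      rcases Multiset.mem_add.mp hm with hm | hm
      · exact hm
      · obtain ⟨g, _, hg⟩ := Multiset.mem_map.mp hm; cases hg
    obtain ⟨Δc', hΔc⟩ := Multiset.exists_cons_of_mem hmem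
    have hΓ : Γ = Δc' + Γb.map FormM.box := by
      have e : Γ + {FormM.imp φ ψ} = (Δc' + Γb.map FormM.box) + {FormM.imp φ ψ} := by
        rw [← h1, hΔc]; simp only [← Multiset.singleton_add]; abel
      exact add_right_cancel e
    have base := GKAmR.boxkn (Δ := Δc') k hk Γ₀ Γs φs hsplit h0 hi
    have H := mixA base (aux1 (φ := φ) (ψ := ψ))
    refine rearr H (by rw [hΓ]) ?_
    rw [← h2, hΔc]; simp only [← Multiset.singleton_add]; abel

/-- Invertibility of the right implication rule. -/
lemma invR' {S : SeqM} (h : GKAmR S) : ∀ {Γ Δ : Multiset FormM} {φ ψ : FormM},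
    S = (Γ, {FormM.imp φ ψ} + Δ) → GKAmR (Γ + {φ}, {ψ} + Δ) := by
  induction h with
  | id Θ =>
    intro Γ Δ φ ψ hS
    injection hS with h1 h2
    subst h1
    rw [h2]
    exact rearr (GKAmR.impL (Γ := Δ + {φ}) (Δ := {ψ} + Δ)
      (rearr (GKAmR.id (Δ + {φ} + {ψ})) rfl (by abel))) (by abel) rfl
  | impL hprem ih =>
    rename_i Γ' Δ' φ' ψ'
    intro Γ Δ φ ψ hS
    injection hS with h1 h2
    have H := ih (Γ := Γ' + {ψ'}) (Δ := {φ'} + Δ)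
      (Prod.ext rfl (by rw [h2]; abel))
    have H' : GKAmR ((Γ' + {φ}) + {ψ'}, {φ'} + ({ψ} + Δ)) :=
      rearr H (by abel) (by abel)
    exact rearr (GKAmR.impL H') (by rw [← h1]; abel) rfl
  | impR hprem ih =>
    rename_i Γ' Δ' φ' ψ'
    intro Γ Δ φ ψ hS
    injection hS with h1 h2
    subst h1
    have h2' : FormM.imp φ' ψ' ::ₘ Δ' = FormM.imp φ ψ ::ₘ Δ := by
      rwa [Multiset.singleton_add, Multiset.singleton_add] at h2
    rcases Multiset.cons_eq_cons.mp h2' with ⟨hf, hΔ⟩ | ⟨_, cs, hcs1, hcs2⟩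
    · injection hf with e1 e2
      subst e1; subst e2; subst hΔ
      exact hprem
    · have H := ih (Γ := Γ' + {φ'}) (Δ := {ψ'} + cs)
        (by refine Prod.ext rfl ?_
            rw [hcs1]; simp only [← Multiset.singleton_add]; abel)
      have H' : GKAmR ((Γ' + {φ}) + {φ'}, {ψ'} + ({ψ} + cs)) :=
        rearr H (by abel) (by abel)
      exact rearr (GKAmR.impR H') rfl (by rw [hcs2]; simp only [← Multiset.singleton_add]; abel)
  | boxkn k hk Γ₀ Γs φs hsplit h0 hi ih0 ihi =>
    rename_i Γb Δc nn
    intro Γ Δ φ ψ hS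
    injection hS with h1 h2
    have hmem : FormM.imp φ ψ ∈ Δc := by
      have hm : FormM.imp φ ψ ∈ (∑ i : Fin nn, ({FormM.box (φs i)} : Multiset FormM)) + Δc := by
        rw [h2]; simp
      rcases Multiset.mem_add.mp hm with hm | hm
      · obtain ⟨i, _, hg⟩ := Multiset.mem_sum.mp hm
        rw [Multiset.mem_singleton] at hg; cases hg
      · exact hm
    obtain ⟨Δc', hΔc⟩ := Multiset.exists_cons_of_mem hmem
    have base := GKAmR.boxkn (Δ := Δc') k hk Γ₀ Γs φs hsplit h0 hi
    have H := mixA base (aux2 (φ := φ) (ψ := ψ))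
    refine rearr H ?_ ?_
    · rw [← h1, hΔc]; simp only [← Multiset.singleton_add]; abel
    · have hΔ : Δ = (∑ i : Fin nn, ({FormM.box (φs i)} : Multiset FormM)) + Δc' := by
        have e : {FormM.imp φ ψ} + Δ =
            {FormM.imp φ ψ} + ((∑ i : Fin nn, ({FormM.box (φs i)} : Multiset FormM)) + Δc') := by
          rw [← h2, hΔc]; simp only [← Multiset.singleton_add]; abel
        exact add_left_cancel e
      dsimp only; rw [hΔ]; abel

/-! ### Box / non-box decomposition -/

def unboxF : FormM → Option FormM
  | .box g => some g
  | _ => none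

def isBoxB : FormM → Bool
  | .box _ => true
  | _ => false

lemma filterMap_add' {α β : Type*} (f : α → Option β) (s t : Multiset α) :
    Multiset.filterMap f (s + t) = Multiset.filterMap f s + Multiset.filterMap f t := by
  induction s using Multiset.induction_on with
  | empty => simp
  | cons a s ih =>
    rw [Multiset.cons_add]
    cases h : f a with
    | none =>
      rw [Multiset.filterMap_cons_none a _ h, Multiset.filterMap_cons_none a _ h, ih]
    | some b =>
      rw [Multiset.filterMap_cons_some f a _ h, Multiset.filterMap_cons_some f a _ h, ih,
        Multiset.cons_add]

def boxPartHom : Multiset FormM →+ Multiset FormM where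
  toFun := fun S => S.filterMap unboxF
  map_zero' := rfl
  map_add' := fun s t => filterMap_add' _ s t

def nonboxPartHom : Multiset FormM →+ Multiset FormM where
  toFun := fun S => S.filter (fun f => isBoxB f = false)
  map_zero' := rfl
  map_add' := fun s t => Multiset.filter_add _ s t

lemma bp_box_single (g : FormM) : boxPartHom {FormM.box g} = {g} := rfl

lemma nbp_box_single (g : FormM) : nonboxPartHom {FormM.box g} = 0 := rfl

lemma bp_map_box (S : Multiset FormM) : boxPartHom (S.map FormM.box) = S := by
  induction S using Multiset.induction_on with
  | empty => rfl
  | cons a S ih =>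
    rw [Multiset.map_cons, ← Multiset.singleton_add, ← Multiset.singleton_add,
      boxPartHom.map_add, bp_box_single, ih]

lemma nbp_map_box (S : Multiset FormM) : nonboxPartHom (S.map FormM.box) = 0 := by
  induction S using Multiset.induction_on with
  | empty => rfl
  | cons a S ih =>
    rw [Multiset.map_cons, ← Multiset.singleton_add, nonboxPartHom.map_add,
      nbp_box_single, ih]
    rfl

lemma bp_decomp (S : Multiset FormM) : nonboxPartHom S + (boxPartHom S).map FormM.box = S := by
  induction S using Multiset.induction_on with
  | empty => rfl
  | cons a S ih =>
    rw [← Multiset.singleton_add, nonboxPartHom.map_add, boxPartHom.map_add,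
      Multiset.map_add]
    cases a with
    | var p =>
      show ({FormM.var p} + nonboxPartHom S) + ((0 : Multiset FormM).map FormM.box + _) = _
      rw [Multiset.map_zero, zero_add, add_assoc, ih]
    | imp φ ψ =>
      show ({FormM.imp φ ψ} + nonboxPartHom S) + ((0 : Multiset FormM).map FormM.box + _) = _
      rw [Multiset.map_zero, zero_add, add_assoc, ih]
    | box g =>
      show ((0 : Multiset FormM) + nonboxPartHom S) + (({g} : Multiset FormM).map FormM.box + _) = _
      rw [zero_add, Multiset.map_singleton]
      rw [show ({FormM.box g} : Multiset FormM) + (boxPartHom S).map FormM.box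
          = FormM.box g ::ₘ (boxPartHom S).map FormM.box from Multiset.singleton_add _ _]
      rw [show nonboxPartHom S + (FormM.box g ::ₘ (boxPartHom S).map FormM.box)
          = {FormM.box g} + (nonboxPartHom S + (boxPartHom S).map FormM.box) by
        simp only [← Multiset.singleton_add]; abel]
      rw [ih]

lemma nsmul_cancel {n : ℕ} (hn : n ≠ 0) {X Y : Multiset FormM} (h : n • X = n • Y) : X = Y := by
  ext a
  have := congrArg (Multiset.count a) h
  rw [Multiset.count_nsmul, Multiset.count_nsmul] at this
  exact Nat.eq_of_mul_eq_mul_left (Nat.pos_of_ne_zero hn) this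

lemma map_smul_sum {α : Type*} (k : ℕ) (M : Multiset α) (g : α → Multiset FormM) :
    (M.map (fun a => k • g a)).sum = k • (M.map g).sum := by
  induction M using Multiset.induction_on with
  | empty => simp
  | cons a M ih => simp [ih, smul_add]

lemma sum_map_singleton' {α β : Type*} (M : Multiset α) (g : α → β) :
    (M.map (fun a => ({g a} : Multiset β))).sum = M.map g := by
  rw [show M.map (fun a => ({g a} : Multiset β)) = (M.map g).map (fun b => ({b} : Multiset β))
    by rw [Multiset.map_map]; rfl, Multiset.sum_map_singleton]

/-- Extraction of `m` blocks with a given label. -/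
lemma extract (ψ : FormM) : ∀ (m : ℕ) (B : Multiset (Multiset FormM × FormM)),
    m ≤ Multiset.count ψ (B.map Prod.snd) →
    ∃ B₁ B₂, B = B₁ + B₂ ∧ (B₁.map Prod.snd) = m • ({ψ} : Multiset FormM) := by
  intro m
  induction m with
  | zero => intro B _; exact ⟨0, B, by simp, by simp⟩
  | succ m ih =>
    intro B hB
    have hmem : ψ ∈ B.map Prod.snd := Multiset.count_pos.mp (by omega)
    obtain ⟨p, hp, hpψ⟩ := Multiset.mem_map.mp hmem
    obtain ⟨B', hB'⟩ := Multiset.exists_cons_of_mem hp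
    have hcount : m ≤ Multiset.count ψ (B'.map Prod.snd) := by
      have : B.map Prod.snd = ψ ::ₘ B'.map Prod.snd := by rw [hB', Multiset.map_cons, hpψ]
      rw [this, Multiset.count_cons_self] at hB
      omega
    obtain ⟨B₁, B₂, hsplit, hsnd⟩ := ih B' hcount
    refine ⟨p ::ₘ B₁, B₂, ?_, ?_⟩
    · rw [hB', hsplit, Multiset.cons_add]
    · rw [Multiset.map_cons, hsnd, hpψ, succ_nsmul]
      rw [show (m • ({ψ} : Multiset FormM) + {ψ}) = ψ ::ₘ m • {ψ} by
        rw [add_comm, Multiset.singleton_add]]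

/-- Grouping blocks into slots. -/
lemma slots (k nn : ℕ) (hnn : nn ≠ 0) :
    ∀ (D : Multiset FormM) (B : Multiset (Multiset FormM × FormM)),
    (B.map Prod.snd) = nn • D →
    (∀ p ∈ B, GKAmR (p.1, k • ({p.2} : Multiset FormM))) →
    ∃ C : Multiset (Multiset FormM × FormM),
      (C.map Prod.snd) = D ∧ (C.map Prod.fst).sum = (B.map Prod.fst).sum ∧
      ∀ p ∈ C, GKAmR (p.1, (nn * k) • ({p.2} : Multiset FormM)) := by
  intro D
  induction D using Multiset.induction_on with
  | empty =>
    intro B hsnd _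
    have : B = 0 := by
      have h0 : B.map Prod.snd = 0 := by simpa using hsnd
      exact Multiset.map_eq_zero.mp h0
    exact ⟨0, by simp, by simp [this], by simp⟩
  | cons ψ D' ih =>
    intro B hsnd hder
    have hcount : nn ≤ Multiset.count ψ (B.map Prod.snd) := by
      rw [hsnd, Multiset.count_nsmul, Multiset.count_cons_self]
      calc nn = nn * 1 := by ring
      _ ≤ nn * (Multiset.count ψ D' + 1) := Nat.mul_le_mul_left nn (by omega)
    obtain ⟨B₁, B₂, hBsplit, hB₁snd⟩ := extract ψ nn B hcount
    have hB₂snd : B₂.map Prod.snd = nn • D' := by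
      have e1 : B.map Prod.snd = nn • ({ψ} : Multiset FormM) + B₂.map Prod.snd := by
        rw [hBsplit, Multiset.map_add, hB₁snd]
      have e2 : nn • (ψ ::ₘ D') = nn • ({ψ} : Multiset FormM) + nn • D' := by
        rw [← Multiset.singleton_add, smul_add]
      rw [hsnd, e2] at e1
      exact (add_left_cancel e1.symm)
    obtain ⟨C', hC'snd, hC'fst, hC'der⟩ := ih B₂ hB₂snd
      (fun p hp => hder p (by rw [hBsplit]; exact Multiset.mem_add.mpr (Or.inr hp)))
    refine ⟨((B₁.map Prod.fst).sum, ψ) ::ₘ C', ?_, ?_, ?_⟩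
    · rw [Multiset.map_cons, hC'snd]
    · rw [Multiset.map_cons, Multiset.sum_cons, hC'fst, hBsplit, Multiset.map_add,
        Multiset.sum_add]
    · intro p hp
      rcases Multiset.mem_cons.mp hp with hp | hp
      · subst hp
        have hm := mixM (B₁.map (fun p => ((p.1, k • ({p.2} : Multiset FormM)) : SeqM)))
          (by intro s hs
              obtain ⟨q, hq, rfl⟩ := Multiset.mem_map.mp hs
              exact hder q (by rw [hBsplit]; exact Multiset.mem_add.mpr (Or.inl hq)))
        have e1 : ((B₁.map (fun p => ((p.1, k • ({p.2} : Multiset FormM)) : SeqM))).map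
            Prod.fst) = B₁.map Prod.fst := by rw [Multiset.map_map]; rfl
        have e2 : ((B₁.map (fun p => ((p.1, k • ({p.2} : Multiset FormM)) : SeqM))).map
            Prod.snd).sum = (nn * k) • ({ψ} : Multiset FormM) := by
          rw [Multiset.map_map]
          rw [show (Prod.snd ∘ (fun p : Multiset FormM × FormM =>
              ((p.1, k • ({p.2} : Multiset FormM)) : SeqM)))
            = (fun p : Multiset FormM × FormM => k • ({p.2} : Multiset FormM)) from rfl]
          rw [map_smul_sum k B₁ (fun p => ({p.2} : Multiset FormM)),
            sum_map_singleton' B₁ Prod.snd, hB₁snd, smul_smul, mul_comm k nn]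
        exact rearr hm (by rw [e1]) (by rw [e2])
      · exact hC'der p hp

def isImp : FormM → Prop := fun f => ∃ φ ψ, f = FormM.imp φ ψ

/-- The atomic (no top-level implication) case of contraction. -/
lemma atomicCase (Γ Δ : Multiset FormM) (n : ℕ) (hn : n ≠ 0)
    (hΓ : ∀ f ∈ Γ, ¬ isImp f) (hΔ : ∀ f ∈ Δ, ¬ isImp f)
    (h : GKAmR (n • Γ, n • Δ)) : GKAmR (Γ, Δ) := by
  obtain ⟨S, hS, h⟩ : ∃ S : SeqM, (n • Γ, n • Δ) = S ∧ GKAmR S := ⟨_, rfl, h⟩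
  cases h with
  | id Θ =>
    injection hS with h1 h2
    have := nsmul_cancel hn (h1.trans h2.symm)
    rw [this]; exact GKAmR.id Δ
  | impL hprem =>
    rename_i Γ' Δ' φ ψ
    injection hS with h1 h2
    exact absurd ⟨φ, ψ, rfl⟩
      (hΓ _ (Multiset.mem_of_mem_nsmul (s := Γ) (by rw [h1]; simp)))
  | impR hprem =>
    rename_i Γ' Δ' φ ψ
    injection hS with h1 h2
    exact absurd ⟨φ, ψ, rfl⟩
      (hΔ _ (Multiset.mem_of_mem_nsmul (s := Δ) (by rw [h2]; simp)))
  | boxkn k hk Γ₀ Γs φs hsplit h0 hi =>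
    rename_i Γb Δc N
    injection hS with h1 h2
    set Θ := nonboxPartHom Γ with hΘ
    set G := boxPartHom Γ with hG
    set D := boxPartHom Δ with hD
    set M := boxPartHom Δc with hM
    have hA : n • G = M + Γb := by
      have e : boxPartHom (n • Γ) = boxPartHom (Δc + Γb.map FormM.box) := by rw [h1]
      rwa [_root_.map_nsmul, _root_.map_add, bp_map_box] at e
    have hB : n • D = (Finset.univ.val.map φs) + M := by
      have e : boxPartHom (n • Δ) =
          boxPartHom ((∑ i : Fin N, ({FormM.box (φs i)} : Multiset FormM)) + Δc) := by
        rw [h2]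
      rw [_root_.map_nsmul, _root_.map_add, map_sum] at e
      rw [show (∑ i : Fin N, boxPartHom {FormM.box (φs i)})
          = ∑ i : Fin N, ({φs i} : Multiset FormM) by simp only [bp_box_single]] at e
      rwa [finsum_singleton Finset.univ φs] at e
    have hC : n • Θ = nonboxPartHom Δc := by
      have e : nonboxPartHom (n • Γ) = nonboxPartHom (Δc + Γb.map FormM.box) := by rw [h1]
      rwa [_root_.map_nsmul, _root_.map_add, nbp_map_box, add_zero] at e
    have hC' : n • nonboxPartHom Δ = nonboxPartHom Δc := by
      have e : nonboxPartHom (n • Δ) =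
          nonboxPartHom ((∑ i : Fin N, ({FormM.box (φs i)} : Multiset FormM)) + Δc) := by
        rw [h2]
      rw [_root_.map_nsmul, _root_.map_add, map_sum] at e
      rw [show (∑ i : Fin N, nonboxPartHom {FormM.box (φs i)}) = 0 by
        simp only [nbp_box_single]; simp] at e
      rwa [zero_add] at e
    have hΘΔ : nonboxPartHom Δ = Θ := nsmul_cancel hn (hC'.trans hC.symm)
    set B₀ : Multiset (Multiset FormM × FormM) :=
      (Finset.univ.val.map (fun i : Fin N => (Γs i, φs i))) +
      (M.map (fun ψ => ((k • ({ψ} : Multiset FormM), ψ)))) with hB₀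
    have hB₀snd : B₀.map Prod.snd = n • D := by
      rw [hB₀, Multiset.map_add, Multiset.map_map, Multiset.map_map, hB]
      congr 1
      exact (Multiset.map_id M).symm ▸ rfl
    have hB₀der : ∀ p ∈ B₀, GKAmR (p.1, k • ({p.2} : Multiset FormM)) := by
      intro p hp
      rcases Multiset.mem_add.mp hp with hp | hp
      · obtain ⟨i, _, rfl⟩ := Multiset.mem_map.mp hp; exact hi i
      · obtain ⟨ψ, _, rfl⟩ := Multiset.mem_map.mp hp; exact GKAmR.id _
    obtain ⟨C, hCsnd, hCfst, hCder⟩ := slots k n hn D B₀ hB₀snd hB₀der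
    have hsp : (n * k) • G = Γ₀ + (C.map Prod.fst).sum := by
      rw [hCfst, hB₀, Multiset.map_add, Multiset.sum_add, Multiset.map_map, Multiset.map_map]
      rw [show ((Prod.fst ∘ fun i : Fin N => (Γs i, φs i))) = Γs from rfl]
      rw [show (Prod.fst ∘ fun ψ => ((k • ({ψ} : Multiset FormM), ψ)))
          = (fun ψ => k • ({ψ} : Multiset FormM)) from rfl]
      rw [map_smul_sum k M (fun ψ => ({ψ} : Multiset FormM)), Multiset.sum_map_singleton]
      rw [← Finset.sum_eq_multiset_sum]
      rw [mul_comm, mul_smul, hA, smul_add, hsplit]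
      abel
    have hk' : 1 ≤ n * k := Nat.one_le_iff_ne_zero.mpr (Nat.mul_ne_zero hn (by omega))
    have key := boxList (n * k) hk' G Θ Γ₀ C hsp h0 hCder
    refine rearr key (bp_decomp Γ) ?_
    rw [hCsnd, add_comm ((D.map FormM.box)) Θ, ← hΘΔ]
    exact bp_decomp Δ

def impC : FormM → ℕ
  | .var _ => 0
  | .imp φ ψ => impC φ + impC ψ + 1
  | .box _ => 0

lemma invLiter : ∀ (j : ℕ) {X Y : Multiset FormM} {φ ψ : FormM},
    GKAmR (X + j • ({FormM.imp φ ψ} : Multiset FormM), Y) →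
    GKAmR (X + j • ({ψ} : Multiset FormM), j • ({φ} : Multiset FormM) + Y) := by
  intro j
  induction j with
  | zero => intro X Y φ ψ h; simpa using h
  | succ j ih =>
    intro X Y φ ψ h
    have h1 : GKAmR ((X + j • ({FormM.imp φ ψ} : Multiset FormM)) + {FormM.imp φ ψ}, Y) :=
      rearr h (by rw [succ_nsmul]; abel) rfl
    have h2 := invL' h1 rfl
    have h3 := ih (X := X + {ψ}) (Y := {φ} + Y) (rearr h2 (by abel) rfl)
    exact rearr h3 (by rw [succ_nsmul]; abel) (by rw [succ_nsmul]; abel)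

lemma invRiter : ∀ (j : ℕ) {X Y : Multiset FormM} {φ ψ : FormM},
    GKAmR (X, j • ({FormM.imp φ ψ} : Multiset FormM) + Y) →
    GKAmR (X + j • ({φ} : Multiset FormM), j • ({ψ} : Multiset FormM) + Y) := by
  intro j
  induction j with
  | zero => intro X Y φ ψ h; simpa using h
  | succ j ih =>
    intro X Y φ ψ h
    have h1 : GKAmR (X, {FormM.imp φ ψ} +
        (j • ({FormM.imp φ ψ} : Multiset FormM) + Y)) :=
      rearr h rfl (by rw [succ_nsmul]; abel)
    have h2 := invR' h1 rfl
    have h3 := ih (X := X + {φ}) (Y := {ψ} + Y)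
      (rearr h2 rfl (by abel))
    exact rearr h3 (by rw [succ_nsmul]; abel) (by rw [succ_nsmul]; abel)

lemma mainAux : ∀ (m : ℕ) (Γ Δ : Multiset FormM) (n : ℕ), 2 ≤ n →
    ((Γ + Δ).map impC).sum ≤ m → GKAmR (n • Γ, n • Δ) → GKAmR (Γ, Δ) := by
  intro m
  induction m with
  | zero =>
    intro Γ Δ n hn hm h
    have hz : ∀ f ∈ Γ + Δ, impC f = 0 := by
      intro f hf
      have := Multiset.sum_eq_zero_iff.mp (Nat.le_zero.mp hm) (impC f)
        (Multiset.mem_map_of_mem impC hf)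
      exact this
    refine atomicCase Γ Δ n (by omega) ?_ ?_ h
    · rintro f hf ⟨φ, ψ, rfl⟩
      have := hz _ (Multiset.mem_add.mpr (Or.inl hf))
      simp [impC] at this
    · rintro f hf ⟨φ, ψ, rfl⟩
      have := hz _ (Multiset.mem_add.mpr (Or.inr hf))
      simp [impC] at this
  | succ m ih =>
    intro Γ Δ n hn hm h
    by_cases hg : ∃ f ∈ Γ, isImp f
    · obtain ⟨f, hf, φ, ψ, rfl⟩ := hg
      obtain ⟨Γ'', rfl⟩ := Multiset.exists_cons_of_mem hf
      have h1 : GKAmR ((n • Γ'') + n • ({FormM.imp φ ψ} : Multiset FormM), n • Δ) :=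
        rearr h (by rw [← Multiset.singleton_add, smul_add]; try abel) rfl
      have h2 := invLiter n h1
      have h3 : GKAmR (n • (Γ'' + {ψ}), n • ({φ} + Δ)) :=
        rearr h2 (by simp only [smul_add]; try abel) (by simp only [smul_add]; try abel)
      have hm' : (((Γ'' + {ψ}) + ({φ} + Δ)).map impC).sum ≤ m := by
        have e : ((FormM.imp φ ψ ::ₘ Γ'' + Δ).map impC).sum
            = (((Γ'' + {ψ}) + ({φ} + Δ)).map impC).sum + 1 := by
          simp only [Multiset.cons_add, Multiset.map_cons, Multiset.sum_cons,
            Multiset.map_add, Multiset.sum_add, Multiset.map_singleton,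
            Multiset.sum_singleton, impC]
          ring
        omega
      have h4 := ih (Γ'' + {ψ}) ({φ} + Δ) n hn hm' h3
      exact rearr (GKAmR.impL h4) (by rw [← Multiset.singleton_add]; try abel) rfl
    · by_cases hd : ∃ f ∈ Δ, isImp f
      · obtain ⟨f, hf, φ, ψ, rfl⟩ := hd
        obtain ⟨Δ'', rfl⟩ := Multiset.exists_cons_of_mem hf
        have h1 : GKAmR (n • Γ, n • ({FormM.imp φ ψ} : Multiset FormM) + n • Δ'') :=
          rearr h rfl (by rw [← Multiset.singleton_add, smul_add]; try abel)
        have h2 := invRiter n h1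
        have h3 : GKAmR (n • (Γ + {φ}), n • ({ψ} + Δ'')) :=
          rearr h2 (by simp only [smul_add]; try abel) (by simp only [smul_add]; try abel)
        have hm' : (((Γ + {φ}) + ({ψ} + Δ'')).map impC).sum ≤ m := by
          have e : ((Γ + FormM.imp φ ψ ::ₘ Δ'').map impC).sum
              = (((Γ + {φ}) + ({ψ} + Δ'')).map impC).sum + 1 := by
            simp only [Multiset.map_cons, Multiset.sum_cons,
              Multiset.map_add, Multiset.sum_add, Multiset.map_singleton,
              Multiset.sum_singleton, impC]
            ring
          omega
        have h4 := ih (Γ + {φ}) ({ψ} + Δ'') n hn hm' h3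
        exact rearr (GKAmR.impR h4) rfl (by rw [← Multiset.singleton_add]; try abel)
      · push_neg at hg hd
        exact atomicCase Γ Δ n (by omega) hg hd h

/-- The rule (SC_n) is GK(A_m)^r-admissible: for every n ≥ 2, if
nΓ ⇒ nΔ is GK(A_m)^r-derivable, then Γ ⇒ Δ is GK(A_m)^r-derivable. -/
theorem stmt_10 (n : ℕ) (hn : 2 ≤ n) (Γ Δ : Multiset FormM)
    (h : GKAmR (n • Γ, n • Δ)) : GKAmR (Γ, Δ) :=
  mainAux (((Γ + Δ).map impC).sum) Γ Δ n hn le_rfl h
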